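/- Let m ≥ 5. Then every proper subgroup of the alternating group Alt(m) has index at least m (equivalently: every subgroup H of alternatingGroup (Fin m) with H ≠ ⊤ satisfies H.index ≥ m), and there exists a subgroup of alternatingGroup (Fin m) of index exactly m. -/

import Mathlib

open Equiv Equiv.Perm Finset

/-- Any nontrivial normal subgroup of `A_m` (`m ≥ 5`) is everything. -/
theorem alt_simple_aux (m : ℕ) (hm : 5 ≤ m) (N : Subgroup (alternatingGroup (Fin m)))
    (hN : N.Normal) (hbot : N ≠ ⊥) : N = ⊤ := by
  classical
  obtain ⟨σ, hσ1⟩ := Subgroup.ne_bot_iff_exists_ne_one.mp hbot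
  obtain ⟨σ, hσN⟩ := σ
  set s : Perm (Fin m) := (σ : Perm (Fin m)) with hs
  have hσne : σ ≠ 1 := fun h => hσ1 (Subtype.ext h)
  have hs1 : s ≠ 1 := fun h => hσne (Subtype.ext h)
  have hsgn : Perm.sign s = 1 := mem_alternatingGroup.mp σ.2
  -- a point moved by s
  have : ∃ a, s a ≠ a := by
    by_contra h
    push_neg at h
    exact hs1 (Equiv.ext h)
  obtain ⟨a, ha⟩ := this
  set b : Fin m := s a with hb
  have hba : b ≠ a := ha
  -- find c with s '' {a,b,c} ≠ {a,b,c}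
  have hc : ∃ c, c ≠ a ∧ c ≠ b ∧ ({s a, s b, s c} : Finset (Fin m)) ≠ {a, b, c} := by
    by_contra hfor
    push_neg at hfor
    -- two points outside {a, b}
    have hcard : 1 < (Finset.univ \ {a, b} : Finset (Fin m)).card := by
      have h2 : ({a, b} : Finset (Fin m)).card ≤ 2 :=
        le_trans (Finset.card_insert_le _ _) (by simp)
      have := Finset.card_sdiff_of_subset (Finset.subset_univ ({a, b} : Finset (Fin m)))
      rw [this]
      simp only [Finset.card_univ, Fintype.card_fin]
      omega
    obtain ⟨c1, hc1, c2, hc2, hc12⟩ := Finset.one_lt_card.mp hcard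
    simp only [Finset.mem_sdiff, Finset.mem_univ, Finset.mem_insert, Finset.mem_singleton,
      true_and, not_or] at hc1 hc2
    have h1 := hfor c1 hc1.1 hc1.2
    have h2 := hfor c2 hc2.1 hc2.2
    have hsbb : s b ≠ b := fun h => hba (s.injective (h.trans hb))
    have hsb : s b = a := by
      have m1 : s b ∈ ({a, b, c1} : Finset (Fin m)) := by
        rw [← h1]; simp
      have m2 : s b ∈ ({a, b, c2} : Finset (Fin m)) := by
        rw [← h2]; simp
      simp only [Finset.mem_insert, Finset.mem_singleton] at m1 m2
      rcases m1 with h | h | h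
      · exact h
      · exact absurd h hsbb
      · rcases m2 with h' | h' | h'
        · exact h'
        · exact absurd h' hsbb
        · exact absurd (h.symm.trans h') hc12
    have hfix : ∀ x, x ≠ a → x ≠ b → s x = x := by
      intro x hxa hxb
      have mx : s x ∈ ({a, b, x} : Finset (Fin m)) := by
        rw [← hfor x hxa hxb]; simp
      simp only [Finset.mem_insert, Finset.mem_singleton] at mx
      rcases mx with h | h | h
      · exact absurd (s.injective (h.trans hsb.symm)) hxb
      · exact absurd (s.injective (h.trans hb)) hxa
      · exact h
    have hswap : s = Equiv.swap a b := by
      refine Equiv.ext fun x => ?_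
      by_cases hxa : x = a
      · subst hxa; rw [swap_apply_left, ← hb]
      by_cases hxb : x = b
      · subst hxb; rw [swap_apply_right]; exact hsb
      · rw [swap_apply_of_ne_of_ne hxa hxb]; exact hfix x hxa hxb
    rw [hswap, sign_swap (Ne.symm hba)] at hsgn
    exact absurd hsgn (by decide)
  obtain ⟨c, hca, hcb, himg⟩ := hc
  have hab : a ≠ b := Ne.symm hba
  have hac : a ≠ c := Ne.symm hca
  have hbc : b ≠ c := Ne.symm hcb
  -- the three-cycle τ
  set τ : Perm (Fin m) := Equiv.swap a b * Equiv.swap a c with hτdef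
  have hτ : IsThreeCycle τ := isThreeCycle_swap_mul_swap_same hab hac hbc
  have hτsupp : τ.support = {a, b, c} := by
    apply Finset.eq_of_subset_of_card_le
    · refine le_trans (support_mul_le _ _) ?_
      rw [support_swap hab, support_swap hac]
      intro x hx
      simp only [Finset.sup_eq_union, Finset.mem_union, Finset.mem_insert,
        Finset.mem_singleton] at hx
      simp only [Finset.mem_insert, Finset.mem_singleton]
      tauto
    · rw [hτ.card_support]
      refine le_trans (Finset.card_insert_le _ _) ?_
      refine Nat.succ_le_succ (le_trans (Finset.card_insert_le _ _) ?_)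
      simp
  have hmapτ : (τ.support).map s.toEmbedding = ({s a, s b, s c} : Finset (Fin m)) := by
    rw [hτsupp]
    simp [Finset.map_insert, Finset.map_singleton]
  have hne : s * τ * s⁻¹ ≠ τ := by
    intro h
    apply himg
    have := congrArg Perm.support h
    rw [support_conj, hmapτ, hτsupp] at this
    exact this
  -- the commutator element in N
  set t : alternatingGroup (Fin m) := ⟨τ, hτ.mem_alternatingGroup⟩ with ht
  set ρ : alternatingGroup (Fin m) := t * σ * t⁻¹ * σ⁻¹ with hρdef
  have hρN : ρ ∈ N := mul_mem (hN.conj_mem _ hσN t) (inv_mem hσN)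
  have hρval : (ρ : Perm (Fin m)) = τ * s * τ⁻¹ * s⁻¹ := rfl
  have hρ1 : ρ ≠ 1 := by
    intro h
    apply hne
    have h2 : τ * s * τ⁻¹ * s⁻¹ = 1 := by rw [← hρval, h]; rfl
    have h3 : τ * s * τ⁻¹ = s := by
      rwa [mul_inv_eq_one] at h2
    have h4 : τ * s = s * τ := mul_inv_eq_iff_eq_mul.mp h3
    exact mul_inv_eq_iff_eq_mul.mpr h4.symm
  have hρval1 : (ρ : Perm (Fin m)) ≠ 1 := fun h => hρ1 (Subtype.ext h)
  -- support bound
  set F : Finset (Fin m) := insert a (insert b (insert c (insert (s b) {s c}))) with hF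
  have hρsupp : (ρ : Perm (Fin m)).support ⊆ F := by
    have e1 : (ρ : Perm (Fin m)) = τ * (s * τ⁻¹ * s⁻¹) := by
      rw [hρval]; group
    rw [e1]
    refine le_trans (support_mul_le _ _) ?_
    rw [support_conj, support_inv, hmapτ, hτsupp]
    intro x hx
    simp only [Finset.sup_eq_union, Finset.mem_union, Finset.mem_insert,
      Finset.mem_singleton] at hx
    simp only [hF, Finset.mem_insert, Finset.mem_singleton]
    rcases hx with (h | h | h) | (h | h | h) <;> simp [h, ← hb]
  have hFcard : F.card ≤ 5 := by
    refine le_trans (Finset.card_insert_le _ _) (Nat.succ_le_succ ?_)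
    refine le_trans (Finset.card_insert_le _ _) (Nat.succ_le_succ ?_)
    refine le_trans (Finset.card_insert_le _ _) (Nat.succ_le_succ ?_)
    refine le_trans (Finset.card_insert_le _ _) (Nat.succ_le_succ ?_)
    simp
  obtain ⟨S, hFS, hS5⟩ := Finset.exists_superset_card_eq hFcard (by simpa using hm)
  have hScard : Fintype.card {x // x ∈ S} = 5 := by rw [Fintype.card_coe, hS5]
  let e : Fin 5 ≃ {x // x ∈ S} := (Fintype.equivFinOfCardEq hScard).symm
  -- the embedding A_5 → A_m
  let Φ : Perm (Fin 5) →* Perm (Fin m) := Equiv.Perm.extendDomainHom e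
  have hΦ : ∀ g : Perm (Fin 5), Φ g = g.extendDomain e := fun _ => rfl
  let Ψ : alternatingGroup (Fin 5) →* alternatingGroup (Fin m) :=
    (Φ.comp (alternatingGroup (Fin 5)).subtype).codRestrict (alternatingGroup (Fin m))
      (fun g => by
        rw [mem_alternatingGroup]
        show Perm.sign ((g : Perm (Fin 5)).extendDomain e) = 1
        rw [sign_extendDomain]
        exact mem_alternatingGroup.mp g.2)
  have hΨval : ∀ g : alternatingGroup (Fin 5),
      ((Ψ g : alternatingGroup (Fin m)) : Perm (Fin m)) = (g : Perm (Fin 5)).extendDomain e :=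
    fun _ => rfl
  -- ρ comes from A_5
  have hmemiff : ∀ x, x ∈ S ↔ (ρ : Perm (Fin m)) x ∈ S := by
    intro x
    constructor
    · intro hx
      by_cases hfix : (ρ : Perm (Fin m)) x = x
      · rwa [hfix]
      · exact hFS (hρsupp (apply_mem_support.mpr (mem_support.mpr hfix)))
    · intro hx
      by_cases hfix : (ρ : Perm (Fin m)) x = x
      · rwa [← hfix]
      · exact hFS (hρsupp (mem_support.mpr hfix))
  set q : Perm {x // x ∈ S} := (ρ : Perm (Fin m)).subtypePerm (fun x => (hmemiff x).symm) with hq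
  set ρ₀ : Perm (Fin 5) := e.symm.permCongr q with hρ₀
  have hkey : ρ₀.extendDomain e = (ρ : Perm (Fin m)) := by
    refine Equiv.ext fun x => ?_
    by_cases hx : x ∈ S
    · rw [Perm.extendDomain_apply_subtype _ _ hx]
      simp [hρ₀, Equiv.permCongr_apply, hq]
    · rw [Perm.extendDomain_apply_not_subtype _ _ hx]
      by_contra hne'
      exact hx (hFS (hρsupp (mem_support.mpr (fun h => hne' h.symm))))
  have hρ₀sign : ρ₀ ∈ alternatingGroup (Fin 5) := by
    rw [mem_alternatingGroup, ← sign_extendDomain ρ₀ e, hkey]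
    exact ρ.2
  have hρ₀ne : (⟨ρ₀, hρ₀sign⟩ : alternatingGroup (Fin 5)) ≠ 1 := by
    intro h
    apply hρval1
    rw [← hkey]
    have : ρ₀ = 1 := congrArg Subtype.val h
    rw [this]
    simp [Perm.extendDomain_one]
  -- pull back N
  set N5 : Subgroup (alternatingGroup (Fin 5)) := N.comap Ψ with hN5def
  have hN5norm : N5.Normal := hN.comap Ψ
  have hmem5 : (⟨ρ₀, hρ₀sign⟩ : alternatingGroup (Fin 5)) ∈ N5 := by
    show Ψ ⟨ρ₀, hρ₀sign⟩ ∈ N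
    have : Ψ ⟨ρ₀, hρ₀sign⟩ = ρ := by
      apply Subtype.ext
      rw [hΨval]
      exact hkey
    rw [this]
    exact hρN
  have hN5bot : N5 ≠ ⊥ := by
    intro h
    rw [h, Subgroup.mem_bot] at hmem5
    exact hρ₀ne hmem5
  have hN5top : N5 = ⊤ := (hN5norm.eq_bot_or_eq_top.resolve_left hN5bot)
  -- a three-cycle lands in N
  set θ : Perm (Fin 5) := Equiv.swap 0 1 * Equiv.swap 0 2 with hθdef
  have hθ : IsThreeCycle θ :=
    isThreeCycle_swap_mul_swap_same (by decide) (by decide) (by decide)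
  have hθ5 : (⟨θ, hθ.mem_alternatingGroup⟩ : alternatingGroup (Fin 5)) ∈ N5 := by
    rw [hN5top]; trivial
  have hθN : Ψ ⟨θ, hθ.mem_alternatingGroup⟩ ∈ N := hθ5
  have hθm : IsThreeCycle ((Ψ ⟨θ, hθ.mem_alternatingGroup⟩ : alternatingGroup (Fin m)) :
      Perm (Fin m)) := by
    show Perm.cycleType _ = {3}
    rw [hΨval]
    rw [cycleType_extendDomain]
    exact hθ
  rw [eq_top_iff, ← hθm.alternating_normalClosure (by simpa using hm)]
  apply Subgroup.normalClosure_le_normal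
  rw [Set.singleton_subset_iff]
  exact hθN

theorem alternatingGroup_proper_subgroup_index_ge (m : ℕ) (hm : 5 ≤ m) :
    (∀ H : Subgroup (alternatingGroup (Fin m)), H ≠ ⊤ → m ≤ H.index) ∧
    ∃ H : Subgroup (alternatingGroup (Fin m)), H.index = m := by
  classical
  constructor
  · intro H hH
    by_contra hlt
    push_neg at hlt
    -- normal core is trivial
    have hcore : H.normalCore = ⊥ := by
      by_contra hb
      have := alt_simple_aux m hm H.normalCore inferInstance hb
      exact hH (le_antisymm le_top (this ▸ H.normalCore_le))
    haveI : Fintype (alternatingGroup (Fin m) ⧸ H) := Fintype.ofFinite _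
    have hinj : Function.Injective
        (MulAction.toPermHom (alternatingGroup (Fin m)) (alternatingGroup (Fin m) ⧸ H)) := by
      rw [← MonoidHom.ker_eq_bot_iff, ← Subgroup.normalCore_eq_ker, hcore]
    have hcard := Fintype.card_le_of_injective _ hinj
    rw [Fintype.card_perm] at hcard
    have hquot : Fintype.card (alternatingGroup (Fin m) ⧸ H) = H.index := by
      rw [Subgroup.index_eq_card, Nat.card_eq_fintype_card]
    rw [hquot] at hcard
    haveI : Nontrivial (Fin m) := ⟨⟨⟨0, by omega⟩, ⟨1, by omega⟩, by
      simp [Fin.ext_iff]⟩⟩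
    have h2 : 2 * Fintype.card (alternatingGroup (Fin m)) = m.factorial := by
      rw [two_mul_card_alternatingGroup, Fintype.card_perm, Fintype.card_fin]
    have hfac : (H.index).factorial ≤ (m - 1).factorial :=
      Nat.factorial_le (by omega)
    have hmfac : m.factorial = m * (m - 1).factorial := by
      conv_lhs => rw [show m = (m - 1) + 1 by omega]
      rw [Nat.factorial_succ]
      congr 1
      omega
    have : m * (m - 1).factorial ≤ 2 * (m - 1).factorial := by
      calc m * (m - 1).factorial = m.factorial := hmfac.symm
        _ = 2 * Fintype.card (alternatingGroup (Fin m)) := h2.symm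
        _ ≤ 2 * (H.index).factorial := by omega
        _ ≤ 2 * (m - 1).factorial := by omega
    have hpos : 0 < (m - 1).factorial := Nat.factorial_pos _
    have : m ≤ 2 := Nat.le_of_mul_le_mul_right this hpos
    omega
  · -- stabilizer of a point
    haveI : MulAction.IsPretransitive (alternatingGroup (Fin m)) (Fin m) := by
      constructor
      intro x y
      by_cases hxy : x = y
      · exact ⟨1, by simp [hxy]⟩
      · have hz : ∃ z, z ≠ x ∧ z ≠ y := by
          by_contra h
          push_neg at h
          have hsub : (Finset.univ : Finset (Fin m)) ⊆ ({x, y} : Finset (Fin m)) := by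
            intro z _
            simp only [Finset.mem_insert, Finset.mem_singleton]
            by_cases hzx : z = x
            · exact Or.inl hzx
            · exact Or.inr (h z hzx)
          have hle := Finset.card_le_card hsub
          rw [Finset.card_univ, Fintype.card_fin] at hle
          have h2 : ({x, y} : Finset (Fin m)).card ≤ 2 :=
            le_trans (Finset.card_insert_le _ _) (by simp)
          omega
        obtain ⟨z, hzx, hzy⟩ := hz
        refine ⟨⟨Equiv.swap x z * Equiv.swap x y, ?_⟩, ?_⟩
        · rw [mem_alternatingGroup, map_mul, sign_swap (Ne.symm hzx), sign_swap hxy]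
          simp
        · show (Equiv.swap x z * Equiv.swap x y) • x = y
          rw [Perm.smul_def]
          simp only [Perm.coe_mul, Function.comp_apply]
          rw [swap_apply_left, swap_apply_of_ne_of_ne (Ne.symm hxy) hzy.symm]
    refine ⟨MulAction.stabilizer (alternatingGroup (Fin m)) (⟨0, by omega⟩ : Fin m), ?_⟩
    rw [MulAction.index_stabilizer_of_transitive, Nat.card_eq_fintype_card, Fintype.card_fin]
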